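/- Let c be a weak composition. Then the sum of x^T over all weak composition tableaux T of shape c equals the sum of the monomials x^d over all weak compositions d such that d dominates c and flatt(d) refines flatt(c). -/

import Mathlib

/-!
STATEMENT 4: Let c be a weak composition. Then the sum of x^T over all weak composition
tableaux T of shape c equals the sum of the monomials x^d over all weak compositions d such
that d dominates c and flatt(d) refines flatt(c).

Conventions: positions are 0-indexed; the variable indexed by `i : ℕ` is `x_{i+1}`, and a
tableau entry `e ∈ {1,…,L}` (where `L = c.length` bounds all entries of a weak composition
tableau of shape `c`) is represented by `e - 1 : Fin L`.  Weak compositions `d` appearing on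
the right-hand side necessarily have support in the first `L` positions and entries at most
`|c|`; they are represented (up to trailing zeros) by functions `Fin L → Fin (c.sum + 1)`.
-/

open scoped Classical
open MvPolynomial

/-- The flattening of a weak composition: delete all zero entries. -/
def flatt (l : List ℕ) : List ℕ := l.filter (· ≠ 0)

/-- `Refines lam mu` : the composition `lam` refines the composition `mu`. -/
def Refines (lam mu : List ℕ) : Prop :=
  ∃ L : List (List ℕ), (∀ b ∈ L, b ≠ []) ∧ L.flatten = lam ∧ L.map List.sum = mu

/-- `Dominates lam mu` : `lam_1 + ⋯ + lam_i ≥ mu_1 + ⋯ + mu_i` for all `i`. -/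
def Dominates (lam mu : List ℕ) : Prop :=
  ∀ i : ℕ, (mu.take i).sum ≤ (lam.take i).sum

/-- The boxes of the Young diagram of a (weak) composition `lam`. -/
def boxes (lam : List ℕ) : Finset (ℕ × ℕ) :=
  (Finset.range lam.length ×ˢ Finset.range (lam.foldr max 0)).filter
    (fun p => p.2 < lam.getD p.1 0)

/-- Lexicographic order on boxes. -/
def boxLe (p q : ℕ × ℕ) : Prop := p.1 < q.1 ∨ (p.1 = q.1 ∧ p.2 ≤ q.2)

/-- A weak composition tableau of shape `lam`, as a function from boxes to `Fin lam.length`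
(`v : Fin lam.length` represents the entry `v + 1 ∈ {1,…,lam.length}`): order-preserving,
rows strictly increasing from row to row, and every entry of (0-indexed) row `i` at most
`i + 1`. -/
def IsWCTFn (lam : List ℕ) (T : {p // p ∈ boxes lam} → Fin lam.length) : Prop :=
  (∀ p q : {p // p ∈ boxes lam}, boxLe p.1 q.1 → T p ≤ T q) ∧
  (∀ p q : {p // p ∈ boxes lam}, p.1.1 < q.1.1 → T p < T q) ∧
  (∀ p : {p // p ∈ boxes lam}, (T p : ℕ) ≤ p.1.1)

open Finset

noncomputable section

lemma take_sum_eq (l : List ℕ) (n : ℕ) :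
    (l.take n).sum = ∑ i ∈ range n, l.getD i 0 := by
  induction n generalizing l with
  | zero => simp
  | succ n ih =>
    cases l with
    | nil => simp
    | cons a tl =>
      rw [List.take_succ_cons, List.sum_cons, ih, Finset.sum_range_succ']
      simp only [List.getD_cons_succ, List.getD_cons_zero]
      omega

lemma sum_range_ite_eq {L : ℕ} (F : ℕ → ℕ) (hF : ∀ j, L ≤ j → F j = 0) (n : ℕ) :
    ∑ j ∈ range n, F j = ∑ j ∈ range L, if j < n then F j else 0 := by
  have h1 : ∑ j ∈ range n, F j = ∑ j ∈ range (max n L), if j < n then F j else 0 :=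
    calc ∑ j ∈ range n, F j = ∑ j ∈ range n, (if j < n then F j else 0) :=
          Finset.sum_congr rfl fun j hj => (if_pos (Finset.mem_range.1 hj)).symm
      _ = ∑ j ∈ range (max n L), if j < n then F j else 0 :=
          Finset.sum_subset (Finset.range_subset_range.2 (le_max_left _ _))
            (fun x _ hx => if_neg (by simpa using hx))
  have h2 : ∑ j ∈ range L, (if j < n then F j else 0) =
      ∑ j ∈ range (max n L), if j < n then F j else 0 :=
    Finset.sum_subset (Finset.range_subset_range.2 (le_max_right _ _))
      (fun x hx' hx => by
        simp only [Finset.mem_range, not_lt] at hx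
        simp [hF x hx])
  rw [h1, h2]

lemma getD_le_foldr_max (l : List ℕ) (i : ℕ) : l.getD i 0 ≤ l.foldr max 0 := by
  induction l generalizing i with
  | nil => simp
  | cons a tl ih =>
    cases i with
    | zero =>
      rw [List.getD_cons_zero, List.foldr_cons]
      exact le_max_left a _
    | succ i =>
      rw [List.getD_cons_succ, List.foldr_cons]
      exact le_trans (ih i) (le_max_right a _)

lemma filter_lt_range (M k : ℕ) (h : k ≤ M) : (range M).filter (· < k) = range k := by
  ext a; simp only [Finset.mem_filter, Finset.mem_range]; omega

lemma exists_take_filter (l : List ℕ) (r : ℕ) :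
    ∃ r', ((l.filter (· ≠ 0)).take r').sum = (l.take r).sum := by
  simp only [ne_eq, decide_not]
  induction l generalizing r with
  | nil => exact ⟨0, by simp⟩
  | cons a tl ih =>
    cases r with
    | zero => exact ⟨0, by simp⟩
    | succ r =>
      obtain ⟨r', hr'⟩ := ih r
      by_cases ha : a = 0
      · subst ha
        obtain ⟨r'', hr''⟩ := ih r
        exact ⟨r'', by simpa using hr''⟩
      · exact ⟨r' + 1, by simp [List.filter_cons, ha, hr']⟩

lemma exists_take_of_filter (l : List ℕ) (r' : ℕ) :
    ∃ r, (l.take r).sum = ((l.filter (· ≠ 0)).take r').sum := by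
  simp only [ne_eq, decide_not]
  induction l generalizing r' with
  | nil => exact ⟨0, by simp⟩
  | cons a tl ih =>
    by_cases ha : a = 0
    · subst ha
      obtain ⟨r, hr⟩ := ih r'
      exact ⟨r + 1, by simpa using hr⟩
    · cases r' with
      | zero => exact ⟨0, by simp⟩
      | succ r' =>
        obtain ⟨r, hr⟩ := ih r'
        exact ⟨r + 1, by simp [List.filter_cons, ha, hr]⟩

lemma flatten_filter_ne_nil (l : List (List ℕ)) :
    (l.filter (· ≠ ([] : List ℕ))).flatten = l.flatten := by
  simp only [ne_eq, decide_not]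
  induction l with
  | nil => simp
  | cons a tl ih =>
    by_cases ha : a = ([] : List ℕ) <;> simp [List.filter_cons, ha, ih]

lemma map_sum_filter_ne_nil (l : List (List ℕ)) (h : ∀ b ∈ l, b.sum = 0 ↔ b = []) :
    (l.filter (· ≠ ([] : List ℕ))).map List.sum = (l.map List.sum).filter (· ≠ 0) := by
  simp only [ne_eq, decide_not]
  induction l with
  | nil => simp
  | cons a tl ih =>
    have ha := h a (by simp)
    have ih' := ih fun b hb => h b (by simp [hb])
    by_cases h0 : a = ([] : List ℕ)
    · subst h0; simp [List.filter_cons, ih']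
    · have : a.sum ≠ 0 := fun hs => h0 (ha.1 hs)
      simp [List.filter_cons, h0, this, ih']

lemma sorted_filter_split {α : Type*} (f : α → ℕ) (n : ℕ) :
    ∀ (l : List α), l.Pairwise (fun a b => f a ≤ f b) → (∀ a ∈ l, f a ≤ n) →
    l = l.filter (fun a => f a < n) ++ l.filter (fun a => f a = n) := by
  intro l
  induction l with
  | nil => simp
  | cons a tl ih =>
    intro hp hb
    rcases List.pairwise_cons.1 hp with ⟨h1, h2⟩
    by_cases hlt : f a < n
    · have hne : ¬ (f a = n) := by omega
      rw [List.filter_cons, List.filter_cons]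
      simp only [hlt, hne, decide_eq_true_eq, if_pos, if_neg, decide_eq_false_iff_not,
        not_false_iff, List.cons_append]
      exact congrArg (a :: ·) (ih h2 fun x hx => hb x (by simp [hx]))
    · have hfa : f a = n := by have := hb a (by simp); omega
      have hall : ∀ x ∈ a :: tl, f x = n := by
        intro x hx
        rcases List.mem_cons.1 hx with rfl | hx
        · exact hfa
        · have := h1 x hx; have := hb x (by simp [hx]); omega
      have e1 : (a :: tl).filter (fun a => f a < n) = [] := by
        apply List.filter_eq_nil_iff.2
        intro x hx; simp [hall x hx]
      have e2 : (a :: tl).filter (fun a => f a = n) = a :: tl := by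
        apply List.filter_eq_self.2
        intro x hx; simp [hall x hx]
      rw [e1, e2, List.nil_append]

lemma flatten_filter_fibers {α : Type*} (f : α → ℕ) :
    ∀ (n : ℕ) (l : List α), l.Pairwise (fun a b => f a ≤ f b) → (∀ a ∈ l, f a < n) →
    ((List.range n).map (fun r => l.filter (fun a => f a = r))).flatten = l := by
  intro n
  induction n with
  | zero =>
    intro l _ hb
    cases l with
    | nil => simp
    | cons a tl => exact absurd (hb a (by simp)) (by omega)
  | succ n ih =>
    intro l hp hb
    rw [List.range_succ, List.map_append, List.flatten_append]
    have hsplit := sorted_filter_split f n l hp (fun a ha => by have := hb a ha; omega)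
    have hsub : ∀ r, r < n → (l.filter (fun a => f a < n)).filter (fun a => f a = r) =
        l.filter (fun a => f a = r) := by
      intro r hr
      rw [List.filter_filter]
      apply List.filter_congr
      intro x _
      by_cases h : f x = r
      · simp [h, hr]
      · simp [h]
    have ihl := ih (l.filter (fun a => f a < n))
      (List.Pairwise.filter _ hp)
      (fun a ha => of_decide_eq_true (List.mem_filter.1 ha).2)
    rw [show (List.range n).map (fun r => l.filter (fun a => f a = r)) =
        (List.range n).map (fun r => (l.filter (fun a => f a < n)).filter (fun a => f a = r)) from
      (List.map_congr_left fun r hr => (hsub r (List.mem_range.1 hr)).symm), ihl]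
    simpa using hsplit.symm

lemma list_eq_map_range_getD (l : List ℕ) :
    (List.range l.length).map (fun r => l.getD r 0) = l := by
  apply List.ext_getElem
  · simp
  · intro i h1 h2
    simp [List.getD_eq_getElem?_getD, List.getElem?_eq_getElem h2]

/-- Prefix sums of `c`. -/
def CS (c : List ℕ) (n : ℕ) : ℕ := ∑ i ∈ range n, c.getD i 0

lemma CS_mono {c : List ℕ} : Monotone (CS c) := fun m n h =>
  Finset.sum_le_sum_of_subset (Finset.range_subset_range.2 h)

lemma CS_succ (c : List ℕ) (n : ℕ) : CS c (n + 1) = CS c n + c.getD n 0 :=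
  Finset.sum_range_succ _ n

lemma CS_of_length_le (c : List ℕ) {n : ℕ} (h : c.length ≤ n) : CS c n = c.sum := by
  have : CS c n = (c.take n).sum := (take_sum_eq c n).symm
  rw [this, List.take_of_length_le h]

lemma mem_boxes {c : List ℕ} {p : ℕ × ℕ} :
    p ∈ boxes c ↔ p.1 < c.length ∧ p.2 < c.getD p.1 0 := by
  unfold boxes
  simp only [Finset.mem_filter, Finset.mem_product, Finset.mem_range]
  constructor
  · rintro ⟨⟨h1, _⟩, h3⟩; exact ⟨h1, h3⟩
  · rintro ⟨h1, h2⟩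
    exact ⟨⟨h1, lt_of_lt_of_le h2 (getD_le_foldr_max c p.1)⟩, h2⟩

lemma boxes_count (c : List ℕ) (P : ℕ → Prop) [DecidablePred P] (t : ℕ) :
    ((boxes c).filter (fun p => P p.1 ∧ p.2 < t)).card =
      ∑ r ∈ range c.length, if P r then min t (c.getD r 0) else 0 := by
  unfold boxes
  rw [Finset.filter_filter, Finset.card_filter, Finset.sum_product]
  apply Finset.sum_congr rfl
  intro r hr
  by_cases hP : P r
  · have hle : min t (c.getD r 0) ≤ c.foldr max 0 :=
      le_trans (min_le_right _ _) (getD_le_foldr_max c r)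
    rw [if_pos hP]
    calc (∑ y ∈ range (c.foldr max 0),
            if y < c.getD r 0 ∧ P r ∧ y < t then 1 else 0)
        = ∑ y ∈ range (c.foldr max 0), if y < min t (c.getD r 0) then 1 else 0 := by
          apply Finset.sum_congr rfl; intro y _
          by_cases hy : y < min t (c.getD r 0)
          · rw [if_pos hy, if_pos ⟨by omega, hP, by omega⟩]
          · rw [if_neg hy, if_neg (by rintro ⟨h1, _, h3⟩; omega)]
      _ = ((range (c.foldr max 0)).filter (fun y => y < min t (c.getD r 0))).card := by
          rw [Finset.card_filter]
      _ = min t (c.getD r 0) := by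
          have hset : ((range (c.foldr max 0)).filter (fun y => y < min t (c.getD r 0))) =
              range (min t (c.getD r 0)) := by
            ext a
            simp only [Finset.mem_filter, Finset.mem_range]
            exact ⟨fun h => h.2, fun h => ⟨lt_of_lt_of_le h hle, h⟩⟩
          rw [hset, Finset.card_range]
  · rw [if_neg hP]
    apply Finset.sum_eq_zero
    intro y _
    rw [if_neg (by rintro ⟨_, h2, _⟩; exact hP h2)]

lemma boxes_count_row (c : List ℕ) (P : ℕ → Prop) [DecidablePred P] :
    ((boxes c).filter (fun p => P p.1)).card =
      ∑ r ∈ range c.length, if P r then c.getD r 0 else 0 := by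
  have h : ((boxes c).filter (fun p => P p.1)) =
      ((boxes c).filter (fun p => P p.1 ∧ p.2 < c.foldr max 0)) := by
    apply Finset.filter_congr
    intro p hp
    have := (mem_boxes.1 hp).2
    have h2 : p.2 < c.foldr max 0 := lt_of_lt_of_le this (getD_le_foldr_max c p.1)
    simp [h2]
  rw [h, boxes_count]
  apply Finset.sum_congr rfl
  intro r hr
  by_cases hP : P r
  · rw [if_pos hP, if_pos hP, min_eq_right (getD_le_foldr_max c r)]
  · rw [if_neg hP, if_neg hP]

lemma card_boxes (c : List ℕ) : (boxes c).card = c.sum := by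
  have h : boxes c = (boxes c).filter (fun p => True) := by simp
  rw [h, boxes_count_row c (fun _ => True)]
  simp only [if_true]
  rw [← take_sum_eq c c.length, List.take_length]

lemma boxes_countlt (c : List ℕ) (n : ℕ) :
    ((boxes c).filter (fun p => p.1 < n)).card = CS c n := by
  rw [boxes_count_row c (fun x => x < n), CS]
  exact (sum_range_ite_eq _ (fun j hj => List.getD_eq_default _ _ hj) n).symm

lemma boxes_count_row_col (c : List ℕ) (r y : ℕ) (hr : r < c.length)
    (hy : y ≤ c.getD r 0) :
    ((boxes c).filter (fun p => p.1 = r ∧ p.2 < y)).card = y := by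
  rw [boxes_count c (fun x => x = r) y]
  rw [Finset.sum_eq_single r]
  · rw [if_pos rfl, min_eq_left hy]
  · intro b _ hb; rw [if_neg (by omega)]
  · intro h; exact absurd (Finset.mem_range.2 hr) h

lemma card_filter_val {s : Finset (ℕ × ℕ)} (Q : ℕ × ℕ → Prop) [DecidablePred Q] :
    (Finset.univ.filter (fun b : {p // p ∈ s} => Q b.1)).card = (s.filter Q).card := by
  rw [Finset.univ_eq_attach, Finset.card_filter, Finset.card_filter]
  exact Finset.sum_attach s (fun a => if Q a then 1 else 0)

lemma card_univ_boxes (c : List ℕ) :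
    (Finset.univ : Finset {p // p ∈ boxes c}).card = c.sum := by
  rw [Finset.univ_eq_attach, Finset.card_attach, card_boxes]



/-- The value occupying global position `n`, given prefix sums `S`. -/
def entryOf (S : ℕ → ℕ) (n : ℕ) : ℕ := sInf {i | n < S (i + 1)}

lemma entry_le {S : ℕ → ℕ} {n m : ℕ} (hm : n < S (m + 1)) : entryOf S n ≤ m :=
  Nat.sInf_le hm

lemma entry_mem {S : ℕ → ℕ} {n : ℕ} (hne : ∃ i, n < S (i + 1)) :
    n < S (entryOf S n + 1) := Nat.sInf_mem hne

lemma entry_ge {S : ℕ → ℕ} (hmono : Monotone S) {n j : ℕ} (hj : S j ≤ n)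
    (hne : ∃ i, n < S (i + 1)) : j ≤ entryOf S n := by
  by_contra h
  push_neg at h
  have hmem := entry_mem hne
  have : S (entryOf S n + 1) ≤ S j := hmono (by omega)
  omega

lemma entry_eq {S : ℕ → ℕ} (hmono : Monotone S) {n i : ℕ} (h1 : S i ≤ n)
    (h2 : n < S (i + 1)) : entryOf S n = i :=
  le_antisymm (entry_le h2) (entry_ge hmono h1 ⟨i, h2⟩)

lemma entry_lb {S : ℕ → ℕ} (hmono : Monotone S) (h0 : S 0 = 0) {n : ℕ} :
    S (entryOf S n) ≤ n := by
  cases h : entryOf S n with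
  | zero => omega
  | succ m =>
    by_contra hc
    push_neg at hc
    have : entryOf S n ≤ m := Nat.sInf_le (show n < S (m + 1) from hc)
    omega

lemma entry_mono {S : ℕ → ℕ} {n n' : ℕ} (h : n ≤ n') (hne : ∃ i, n' < S (i + 1)) :
    entryOf S n ≤ entryOf S n' :=
  Nat.sInf_le (show n < S (entryOf S n' + 1) from lt_of_le_of_lt h (Nat.sInf_mem hne))

/-- extension of a `Fin L`-indexed family by zero -/
def dext {L : ℕ} (f : Fin L → ℕ) (j : ℕ) : ℕ := if h : j < L then f ⟨j, h⟩ else 0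

lemma dext_zero {L : ℕ} (f : Fin L → ℕ) {j : ℕ} (h : L ≤ j) : dext f j = 0 := by
  rw [dext, dif_neg (by omega)]

lemma dext_val {L : ℕ} (f : Fin L → ℕ) (i : Fin L) : dext f (i : ℕ) = f i := by
  rw [dext, dif_pos i.2]

/-- prefix sums of a `Fin L`-indexed weak composition -/
def SP {L : ℕ} (f : Fin L → ℕ) (n : ℕ) : ℕ := ∑ j ∈ range n, dext f j

lemma SP_mono {L : ℕ} (f : Fin L → ℕ) : Monotone (SP f) := fun _ _ h =>
  Finset.sum_le_sum_of_subset (Finset.range_subset_range.2 h)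

lemma SP_zero {L : ℕ} (f : Fin L → ℕ) : SP f 0 = 0 := rfl

lemma SP_succ {L : ℕ} (f : Fin L → ℕ) (n : ℕ) : SP f (n + 1) = SP f n + dext f n :=
  Finset.sum_range_succ _ n

lemma SP_eq_filter_sum {L : ℕ} (f : Fin L → ℕ) (n : ℕ) :
    SP f n = ∑ i ∈ Finset.univ.filter (fun i : Fin L => (i : ℕ) < n), f i := by
  rw [SP, sum_range_ite_eq (dext f) (fun j hj => dext_zero f hj) n, Finset.sum_filter,
    ← Fin.sum_univ_eq_sum_range (fun j => if j < n then dext f j else 0) L]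
  apply Finset.sum_congr rfl
  intro i _
  by_cases h : (i : ℕ) < n
  · rw [if_pos h, if_pos h, dext_val]
  · rw [if_neg h, if_neg h]

lemma SP_full {L : ℕ} (f : Fin L → ℕ) {n : ℕ} (h : L ≤ n) : SP f n = ∑ i, f i := by
  rw [SP_eq_filter_sum]
  apply Finset.sum_congr _ (fun _ _ => rfl)
  apply Finset.filter_true_of_mem
  intro i _
  exact lt_of_lt_of_le i.2 h

lemma getD_ofFn {L : ℕ} (f : Fin L → ℕ) (j : ℕ) : (List.ofFn f).getD j 0 = dext f j := by
  rw [List.getD_eq_getElem?_getD, List.getElem?_ofFn, dext]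
  by_cases h : j < L
  · rw [dif_pos h, dif_pos h, Option.getD_some]
  · rw [dif_neg h, dif_neg h, Option.getD_none]

lemma ofFn_take_sum {L : ℕ} (f : Fin L → ℕ) (n : ℕ) :
    ((List.ofFn f).take n).sum = SP f n := by
  rw [take_sum_eq, SP]
  exact Finset.sum_congr rfl fun j _ => getD_ofFn f j

lemma list_filtermap_sum {α : Type*} (l : List α) (q : α → Bool) (f : α → ℕ) :
    ((l.filter q).map f).sum = (l.map (fun a => if q a then f a else 0)).sum := by
  induction l with
  | nil => simp
  | cons a tl ih =>
    cases h : q a <;> simp [List.filter_cons, h, ih]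

lemma lsum_filter_map {L : ℕ} (p : Fin L → Prop) [DecidablePred p] (f : Fin L → ℕ) :
    (((List.finRange L).filter (fun i => p i)).map f).sum =
      ∑ i ∈ Finset.univ.filter p, f i := by
  rw [list_filtermap_sum, Finset.sum_filter, Fin.sum_univ_def]
  congr 1
  apply List.map_congr_left
  intro i _
  by_cases h : p i <;> simp [h]


/-! ### Forward direction: structure of a weak composition tableau -/

/-- strict lexicographic order on boxes -/
def boxLt (p q : ℕ × ℕ) : Prop := p.1 < q.1 ∨ (p.1 = q.1 ∧ p.2 < q.2)

lemma boxLt_of_not_boxLe {p q : ℕ × ℕ} (h : ¬ boxLe p q) : boxLt q p := by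
  unfold boxLe at h; unfold boxLt; omega

lemma boxLe_of_boxLt {p q : ℕ × ℕ} (h : boxLt p q) : boxLe p q := by
  unfold boxLt at h; unfold boxLe; omega

lemma boxLt_irrefl (p : ℕ × ℕ) : ¬ boxLt p p := by unfold boxLt; omega

section Tab

variable {c : List ℕ} (T : {p // p ∈ boxes c} → Fin c.length)

/-- content of a tableau -/
def cnt (i : Fin c.length) : ℕ := (Finset.univ.filter (fun b => T b = i)).card

/-- the row in which the value `i` appears -/
def rowOf (i : Fin c.length) : ℕ :=
  if h : (Finset.univ.filter (fun b => T b = i)).Nonempty then h.choose.1.1 else 0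

/-- the global (lexicographic) position of a box -/
def posOf (c : List ℕ) (p : ℕ × ℕ) : ℕ := CS c p.1 + p.2

variable {T}

lemma exists_box_of_cnt_ne {i : Fin c.length} (h : cnt T i ≠ 0) :
    ∃ b, T b = i := by
  have : (Finset.univ.filter (fun b => T b = i)).Nonempty :=
    Finset.card_pos.1 (Nat.pos_of_ne_zero h)
  obtain ⟨b, hb⟩ := this
  exact ⟨b, (Finset.mem_filter.1 hb).2⟩

variable (hT : IsWCTFn c T)
include hT

lemma rows_eq {b b' : {p // p ∈ boxes c}} (h : T b = T b') : b.1.1 = b'.1.1 := by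
  rcases Nat.lt_trichotomy b.1.1 b'.1.1 with hlt | he | hgt
  · exact absurd (hT.2.1 _ _ hlt) (by omega)
  · exact he
  · exact absurd (hT.2.1 _ _ hgt) (by omega)

lemma rowOf_eq (b : {p // p ∈ boxes c}) : rowOf T (T b) = b.1.1 := by
  rw [rowOf, dif_pos ⟨b, Finset.mem_filter.2 ⟨Finset.mem_univ b, rfl⟩⟩]
  generalize_proofs h
  exact rows_eq hT (Finset.mem_filter.1 h.choose_spec).2

lemma rowOf_lt {i : Fin c.length} (h : cnt T i ≠ 0) : rowOf T i < c.length := by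
  obtain ⟨b, rfl⟩ := exists_box_of_cnt_ne h
  rw [rowOf_eq hT b]
  exact (mem_boxes.1 b.2).1

lemma rowOf_mono {i i' : Fin c.length} (h : i ≤ i') (hi : cnt T i ≠ 0)
    (hi' : cnt T i' ≠ 0) : rowOf T i ≤ rowOf T i' := by
  obtain ⟨b, rfl⟩ := exists_box_of_cnt_ne hi
  obtain ⟨b', rfl⟩ := exists_box_of_cnt_ne hi'
  rw [rowOf_eq hT b, rowOf_eq hT b']
  by_contra hc
  push_neg at hc
  exact absurd (hT.2.1 _ _ hc) (by omega)

omit hT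

lemma SP_cnt (n : ℕ) :
    SP (cnt T) n = (Finset.univ.filter (fun b => (T b : ℕ) < n)).card := by
  rw [SP_eq_filter_sum]
  rw [Finset.card_eq_sum_card_fiberwise
    (f := T) (t := Finset.univ.filter (fun i : Fin c.length => (i : ℕ) < n))
    (fun b hb => Finset.mem_filter.2 ⟨Finset.mem_univ _, (Finset.mem_filter.1 hb).2⟩)]
  apply Finset.sum_congr rfl
  intro i hi
  rw [cnt]
  congr 1
  ext b
  simp only [Finset.mem_filter, Finset.mem_univ, true_and]
  constructor
  · intro h
    exact ⟨by rw [h]; exact (Finset.mem_filter.1 hi).2, h⟩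
  · exact fun h => h.2

lemma row_lt_card (n : ℕ) :
    (Finset.univ.filter (fun b : {p // p ∈ boxes c} => b.1.1 < n)).card = CS c n := by
  rw [card_filter_val (fun p => p.1 < n), boxes_countlt]

include hT

lemma cnt_dominates (n : ℕ) : CS c n ≤ SP (cnt T) n := by
  rw [SP_cnt, ← row_lt_card (c := c) n]
  apply Finset.card_le_card
  intro b hb
  simp only [Finset.mem_filter, Finset.mem_univ, true_and] at hb ⊢
  exact lt_of_le_of_lt (hT.2.2 b) hb

omit hT

lemma cnt_total : ∑ i, cnt T i = c.sum := by
  rw [← card_univ_boxes c,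
    Finset.card_eq_sum_card_fiberwise (f := T) (t := Finset.univ) (fun b _ => Finset.mem_univ _)]
  rfl

lemma cnt_le_sum (i : Fin c.length) : cnt T i ≤ c.sum := by
  rw [← card_univ_boxes c]
  exact Finset.card_filter_le _ _

lemma pos_card (b : {p // p ∈ boxes c}) :
    (Finset.univ.filter (fun b' : {p // p ∈ boxes c} => boxLt b'.1 b.1)).card =
      posOf c b.1 := by
  rw [card_filter_val (fun p => boxLt p b.1)]
  have hsplit : (boxes c).filter (fun p => boxLt p b.1) =
      (boxes c).filter (fun p => p.1 < b.1.1) ∪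
      (boxes c).filter (fun p => p.1 = b.1.1 ∧ p.2 < b.1.2) := by
    rw [← Finset.filter_or]
    apply Finset.filter_congr
    intro p _
    unfold boxLt
    simp
  rw [hsplit, Finset.card_union_of_disjoint (by
    apply Finset.disjoint_filter_filter'
    rw [disjoint_iff_inf_le]
    intro p hp
    simp only [Pi.inf_apply, inf_Prop_eq] at hp
    omega)]
  rw [boxes_countlt, boxes_count_row_col c b.1.1 b.1.2 (mem_boxes.1 b.2).1
    (le_of_lt (mem_boxes.1 b.2).2), posOf]

include hT

lemma pos_sandwich (b : {p // p ∈ boxes c}) :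
    SP (cnt T) (T b : ℕ) ≤ posOf c b.1 ∧ posOf c b.1 < SP (cnt T) ((T b : ℕ) + 1) := by
  constructor
  · rw [SP_cnt, ← pos_card b]
    apply Finset.card_le_card
    intro b' hb'
    simp only [Finset.mem_filter, Finset.mem_univ, true_and] at hb' ⊢
    by_contra hc
    have hne : ¬ (b'.1.1 = b.1.1 ∧ b'.1.2 = b.1.2) := by
      rintro ⟨h1, h2⟩
      have : b' = b := Subtype.ext (Prod.ext h1 h2)
      subst this
      omega
    have hle : boxLe b.1 b'.1 := by unfold boxLt at hc; unfold boxLe; omega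
    have hv : (T b : ℕ) ≤ (T b' : ℕ) := hT.1 b b' hle
    omega
  · rw [SP_cnt, ← pos_card b]
    apply Finset.card_lt_card
    constructor
    · intro b' hb'
      simp only [Finset.mem_filter, Finset.mem_univ, true_and] at hb' ⊢
      have hv : (T b' : ℕ) ≤ (T b : ℕ) := hT.1 b' b (boxLe_of_boxLt hb')
      omega
    · intro hsup
      have hb : b ∈ Finset.univ.filter
          (fun b' : {p // p ∈ boxes c} => (T b' : ℕ) < (T b : ℕ) + 1) :=
        Finset.mem_filter.2 ⟨Finset.mem_univ _, by omega⟩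
      have := Finset.mem_filter.1 (hsup hb)
      exact boxLt_irrefl b.1 this.2

end Tab
section Tab2

variable {c : List ℕ} (T : {p // p ∈ boxes c} → Fin c.length)

/-- support of the content, as a list -/
def suppL : List (Fin c.length) := (List.finRange c.length).filter (fun i => cnt T i ≠ 0)

/-- the values appearing in row `r` -/
def blkI (r : ℕ) : List (Fin c.length) := (suppL T).filter (fun i => rowOf T i = r)

/-- the block of multiplicities of values in row `r` -/
def blk (r : ℕ) : List ℕ := (blkI T r).map (fun i => cnt T i)

variable {T} (hT : IsWCTFn c T)
include hT

lemma row_fiber {r : ℕ} (hr : r < c.length) :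
    c.getD r 0 = ∑ i ∈ Finset.univ.filter
      (fun i => rowOf T i = r ∧ cnt T i ≠ 0), cnt T i := by
  have h0 : c.getD r 0 =
      (Finset.univ.filter (fun b : {p // p ∈ boxes c} => b.1.1 = r)).card := by
    rw [card_filter_val (fun p => p.1 = r)]
    have : (boxes c).filter (fun p => p.1 = r) =
        (boxes c).filter (fun p => p.1 = r ∧ p.2 < c.getD r 0) := by
      apply Finset.filter_congr
      intro p hp
      have h2 := (mem_boxes.1 hp).2
      constructor
      · intro h; exact ⟨h, h ▸ h2⟩
      · exact fun h => h.1
    rw [this, boxes_count_row_col c r _ hr (le_refl _)]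
  rw [h0, Finset.card_eq_sum_card_fiberwise (f := T) (t := Finset.univ)
    (fun b _ => Finset.mem_univ _), Finset.sum_filter]
  apply Finset.sum_congr rfl
  intro i _
  by_cases hcnt : cnt T i = 0
  · have hempty : Finset.univ.filter (fun b => T b = i) = ∅ := Finset.card_eq_zero.1 hcnt
    have hsub : (Finset.univ.filter (fun b : {p // p ∈ boxes c} => b.1.1 = r)).filter
        (fun b => T b = i) ⊆ Finset.univ.filter (fun b => T b = i) := by
      intro b hb
      simp only [Finset.mem_filter, Finset.mem_univ, true_and] at hb ⊢
      exact hb.2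
    rw [hempty] at hsub
    rw [Finset.subset_empty.1 hsub, if_neg (by tauto)]
    rfl
  · by_cases hrow : rowOf T i = r
    · have heq : (Finset.univ.filter (fun b : {p // p ∈ boxes c} => b.1.1 = r)).filter
          (fun b => T b = i) = Finset.univ.filter (fun b => T b = i) := by
        ext b
        simp only [Finset.mem_filter, Finset.mem_univ, true_and]
        constructor
        · exact fun h => h.2
        · intro h
          refine ⟨?_, h⟩
          rw [← rowOf_eq hT b, h, hrow]
      rw [heq, if_pos ⟨hrow, hcnt⟩]
      rfl
    · have heq : (Finset.univ.filter (fun b : {p // p ∈ boxes c} => b.1.1 = r)).filter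
          (fun b => T b = i) = ∅ := by
        ext b
        simp only [Finset.mem_filter, Finset.mem_univ, true_and, Finset.notMem_empty,
          iff_false, not_and]
        intro hbr hbt
        exact absurd (by rw [← rowOf_eq hT b, hbt] at hbr; exact hbr) hrow
      rw [heq, if_neg (by tauto)]
      rfl

lemma blk_sum {r : ℕ} (hr : r < c.length) : (blk T r).sum = c.getD r 0 := by
  rw [blk, blkI, suppL, List.filter_filter]
  have hpred : (fun a => (decide (rowOf T a = r) && decide (cnt T a ≠ 0))) =
      (fun a : Fin c.length => decide (rowOf T a = r ∧ cnt T a ≠ 0)) := by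
    funext a
    by_cases h1 : rowOf T a = r <;> by_cases h2 : cnt T a ≠ 0 <;> simp [h1, h2]
  rw [hpred, lsum_filter_map (fun a => rowOf T a = r ∧ cnt T a ≠ 0) (fun i => cnt T i),
    ← row_fiber hT hr]

lemma refines_cnt :
    Refines (flatt (List.ofFn fun i => cnt T i)) (flatt c) := by
  classical
  refine ⟨((List.range c.length).map (blk T)).filter (· ≠ []), ?_, ?_, ?_⟩
  · intro bl hbl
    exact of_decide_eq_true (List.mem_filter.1 hbl).2
  · -- flatten
    have hpair : (suppL T).Pairwise (fun a b => rowOf T a ≤ rowOf T b) := by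
      rw [suppL]
      refine List.pairwise_filter.2 ?_
      exact (List.pairwise_lt_finRange _).imp
        (fun h ha hb => rowOf_mono hT (le_of_lt h) (of_decide_eq_true ha) (of_decide_eq_true hb))
    have hbound : ∀ i ∈ suppL T, rowOf T i < c.length := fun i hi =>
      rowOf_lt hT (of_decide_eq_true (List.mem_filter.1 hi).2)
    have hflat := flatten_filter_fibers (rowOf T) c.length (suppL T) hpair hbound
    rw [flatten_filter_ne_nil]
    have h1 : (List.range c.length).map (blk T) =
        ((List.range c.length).map (blkI T)).map (List.map (fun i => cnt T i)) := by
      rw [List.map_map]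
      rfl
    rw [h1, ← List.map_flatten]
    rw [show ((List.range c.length).map (blkI T)).flatten = suppL T from hflat]
    rw [flatt, List.ofFn_eq_map, List.filter_map]
    rfl
  · -- block sums
    have hz : ∀ bl ∈ (List.range c.length).map (blk T), bl.sum = 0 ↔ bl = [] := by
      intro bl hbl
      obtain ⟨r, hr, rfl⟩ := List.mem_map.1 hbl
      constructor
      · intro hs
        by_contra hne
        obtain ⟨x, hx⟩ := List.exists_mem_of_ne_nil _ hne
        have hx0 := List.sum_eq_zero_iff.1 hs x hx
        obtain ⟨i, hi, rfl⟩ := List.mem_map.1 hx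
        have hi' : i ∈ suppL T := List.mem_filter.1 hi |>.1
        exact absurd hx0 (of_decide_eq_true (List.mem_filter.1 hi').2)
      · intro h; rw [h]; rfl
    rw [map_sum_filter_ne_nil _ hz, List.map_map]
    have h2 : (List.range c.length).map (List.sum ∘ blk T) =
        (List.range c.length).map (fun r => c.getD r 0) :=
      List.map_congr_left fun r hr => blk_sum hT (List.mem_range.1 hr)
    rw [h2, list_eq_map_range_getD]
    rfl

end Tab2

/-- the canonical tableau attached to a weak composition `f` -/
def Phi (c : List ℕ) (f : Fin c.length → ℕ) (b : {p // p ∈ boxes c}) : Fin c.length :=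
  ⟨entryOf (SP f) (posOf c b.1) % c.length,
   Nat.mod_lt _ (Nat.lt_of_le_of_lt (Nat.zero_le _) (mem_boxes.1 b.2).1)⟩

lemma Phi_eq_of_wct {c : List ℕ} {T : {p // p ∈ boxes c} → Fin c.length}
    (hT : IsWCTFn c T) : Phi c (fun i => cnt T i) = T := by
  funext b
  have hs := pos_sandwich hT b
  have he : entryOf (SP (cnt T)) (posOf c b.1) = (T b : ℕ) :=
    entry_eq (SP_mono _) hs.1 hs.2
  apply Fin.ext
  simp only [Phi, he]
  exact Nat.mod_eq_of_lt (T b).2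

/-! ### Backward direction: the canonical tableau of a dominating refinement -/

lemma length_pos_of_sum_pos {c : List ℕ} (h : 0 < c.sum) : 0 < c.length := by
  by_contra h0
  have hc0 : c = [] := List.length_eq_zero_iff.1 (by omega)
  rw [hc0] at h
  simp at h

section Back

variable {c : List ℕ} {f : Fin c.length → ℕ}

lemma pos_lt_sum (b : {p // p ∈ boxes c}) : posOf c b.1 < c.sum := by
  obtain ⟨hr, hy⟩ := mem_boxes.1 b.2
  have h1 : posOf c b.1 < CS c (b.1.1 + 1) := by
    rw [CS_succ, posOf]; omega
  have h2 : CS c (b.1.1 + 1) ≤ CS c c.length := CS_mono (by omega)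
  rw [CS_of_length_le c (le_refl _)] at h2
  omega

/-- decoding of a global position into a box -/
def decB (c : List ℕ) (n : ℕ) : ℕ × ℕ := (entryOf (CS c) n, n - CS c (entryOf (CS c) n))

lemma decB_facts {c : List ℕ} {n : ℕ} (hn : n < c.sum) :
    decB c n ∈ boxes c ∧ posOf c (decB c n) = n := by
  have hL : 0 < c.length := length_pos_of_sum_pos (by omega)
  have hLL : c.length - 1 + 1 = c.length := by omega
  have hcsne : ∃ jj, n < CS c (jj + 1) := by
    refine ⟨c.length - 1, ?_⟩
    rw [hLL, CS_of_length_le c (le_refl _)]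
    exact hn
  have h1 : CS c (entryOf (CS c) n) ≤ n := entry_lb CS_mono rfl
  have h2 : n < CS c (entryOf (CS c) n + 1) := entry_mem hcsne
  have hrlt : entryOf (CS c) n < c.length := by
    apply Nat.lt_of_le_of_lt (entry_le (m := c.length - 1) ?_)
      (by omega : c.length - 1 < c.length)
    rw [hLL, CS_of_length_le c (le_refl _)]
    exact hn
  rw [CS_succ] at h2
  constructor
  · exact mem_boxes.2 ⟨hrlt, by simp only [decB]; omega⟩
  · rw [posOf, decB]
    simp only
    omega

lemma decB_posOf (b : {p // p ∈ boxes c}) : decB c (posOf c b.1) = b.1 := by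
  obtain ⟨hr, hy⟩ := mem_boxes.1 b.2
  have h1 : CS c b.1.1 ≤ posOf c b.1 := Nat.le_add_right _ _
  have h2 : posOf c b.1 < CS c (b.1.1 + 1) := by rw [CS_succ, posOf]; omega
  have he : entryOf (CS c) (posOf c b.1) = b.1.1 := entry_eq CS_mono h1 h2
  rw [decB, he]
  apply Prod.ext
  · rfl
  · simp only [posOf]
    omega

variable (hdom : ∀ n, CS c n ≤ SP f n) (htot : SP f c.length = c.sum)
  (hcut : ∀ r, ∃ j, SP f j = CS c r)

include htot

lemma back_ne {m : ℕ} (hm : m < c.sum) : ∃ i, m < SP f (i + 1) := by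
  have hL : 0 < c.length := length_pos_of_sum_pos (by omega)
  refine ⟨c.length - 1, ?_⟩
  rw [(by omega : c.length - 1 + 1 = c.length), htot]
  exact hm

lemma Phi_val (b : {p // p ∈ boxes c}) :
    (Phi c f b : ℕ) = entryOf (SP f) (posOf c b.1) := by
  have hL : 0 < c.length := length_pos_of_sum_pos
    (Nat.lt_of_le_of_lt (Nat.zero_le _) (pos_lt_sum b))
  have he : entryOf (SP f) (posOf c b.1) < c.length := by
    apply Nat.lt_of_le_of_lt (entry_le (m := c.length - 1) ?_)
      (by omega : c.length - 1 < c.length)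
    rw [(by omega : c.length - 1 + 1 = c.length), htot]
    exact pos_lt_sum b
  exact Nat.mod_eq_of_lt he

include hdom hcut

lemma Phi_isWCT : IsWCTFn c (Phi c f) := by
  have hposmono : ∀ p q : {p // p ∈ boxes c}, boxLe p.1 q.1 → posOf c p.1 ≤ posOf c q.1 := by
    intro p q h
    rcases h with h | ⟨h1, h2⟩
    · have e1 : posOf c p.1 < CS c (p.1.1 + 1) := by
        rw [CS_succ, posOf]
        have := (mem_boxes.1 p.2).2
        omega
      have e2 : CS c (p.1.1 + 1) ≤ CS c q.1.1 := CS_mono (by omega)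
      have e3 : CS c q.1.1 ≤ posOf c q.1 := Nat.le_add_right _ _
      omega
    · rw [posOf, posOf, h1]; omega
  refine ⟨?_, ?_, ?_⟩
  · intro p q h
    rw [Fin.le_def, Phi_val htot p, Phi_val htot q]
    exact entry_mono (hposmono p q h) (back_ne htot (pos_lt_sum q))
  · intro p q h
    rw [Fin.lt_def, Phi_val htot p, Phi_val htot q]
    obtain ⟨j, hj⟩ := hcut (p.1.1 + 1)
    have hcr : c.getD p.1.1 0 > 0 := Nat.lt_of_le_of_lt (Nat.zero_le _) (mem_boxes.1 p.2).2
    have hppos : posOf c p.1 < CS c (p.1.1 + 1) := by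
      rw [CS_succ, posOf]
      have := (mem_boxes.1 p.2).2
      omega
    have hj1 : 1 ≤ j := by
      by_contra hj0
      have hj0' : j = 0 := by omega
      subst hj0'
      rw [SP_zero] at hj
      rw [CS_succ] at hj
      omega
    have hle : entryOf (SP f) (posOf c p.1) ≤ j - 1 := by
      apply entry_le
      rw [(by omega : j - 1 + 1 = j), hj]
      exact hppos
    have hge : j ≤ entryOf (SP f) (posOf c q.1) := by
      apply entry_ge (SP_mono f) _ (back_ne htot (pos_lt_sum q))
      rw [hj]
      calc CS c (p.1.1 + 1) ≤ CS c q.1.1 := CS_mono (by omega)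
        _ ≤ posOf c q.1 := Nat.le_add_right _ _
    omega
  · intro p
    rw [Phi_val htot p]
    apply entry_le
    calc posOf c p.1 < CS c (p.1.1 + 1) := by
          rw [CS_succ, posOf]
          have := (mem_boxes.1 p.2).2
          omega
      _ ≤ SP f (p.1.1 + 1) := hdom _

omit hdom hcut

lemma Phi_cnt (i : Fin c.length) : cnt (Phi c f) i = f i := by
  have hSPle : SP f ((i : ℕ) + 1) ≤ c.sum := by
    rw [← htot]; exact SP_mono f i.2
  have hcard : (Finset.univ.filter (fun b => Phi c f b = i)).card =
      (Finset.Ico (SP f (i : ℕ)) (SP f ((i : ℕ) + 1))).card := by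
    refine Finset.card_bij' (fun b _ => posOf c b.1)
      (fun n hn => ⟨decB c n,
        (decB_facts (Nat.lt_of_lt_of_le (Finset.mem_Ico.1 hn).2 hSPle)).1⟩) ?_ ?_ ?_ ?_
    · -- hi
      intro b hb
      have hb' : (Phi c f b : ℕ) = (i : ℕ) := by rw [(Finset.mem_filter.1 hb).2]
      rw [Phi_val htot b] at hb'
      rw [Finset.mem_Ico]
      refine ⟨?_, ?_⟩
      · rw [← hb']; exact entry_lb (SP_mono f) (SP_zero f)
      · rw [← hb']; exact entry_mem (back_ne htot (pos_lt_sum b))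
    · -- hj
      intro n hn
      rw [Finset.mem_filter]
      refine ⟨Finset.mem_univ _, ?_⟩
      have hn' := Finset.mem_Ico.1 hn
      have hnN : n < c.sum := Nat.lt_of_lt_of_le hn'.2 hSPle
      apply Fin.ext
      rw [Phi_val htot]
      show entryOf (SP f) (posOf c (decB c n)) = (i : ℕ)
      rw [(decB_facts hnN).2]
      exact entry_eq (SP_mono f) hn'.1 hn'.2
    · -- left inverse
      intro b hb
      exact Subtype.ext (decB_posOf b)
    · -- right inverse
      intro n hn
      have hn' := Finset.mem_Ico.1 hn
      have hnN : n < c.sum := Nat.lt_of_lt_of_le hn'.2 hSPle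
      show posOf c (decB c n) = n
      exact (decB_facts hnN).2
  rw [cnt, hcard, Nat.card_Ico, SP_succ, ← dext_val f i]
  omega

end Back

/-! ### Translation of the statement hypotheses, and assembly -/

lemma flatt_sum (l : List ℕ) : (flatt l).sum = l.sum := by
  rw [flatt]
  simp only [ne_eq, decide_not]
  induction l with
  | nil => simp
  | cons a tl ih =>
    by_cases ha : a = 0
    · subst ha; simp [List.filter_cons, ih]
    · simp [List.filter_cons, ha, ih]

lemma flatten_take_prefix (Lw : List (List ℕ)) (r' : ℕ) :
    ((Lw.flatten).take ((Lw.take r').flatten).length).sum =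
      ((Lw.map List.sum).take r').sum := by
  have h : Lw.flatten = (Lw.take r').flatten ++ (Lw.drop r').flatten := by
    rw [← List.flatten_append, List.take_append_drop]
  rw [h, List.take_left, List.sum_flatten, List.map_take]

section Translate

variable {c : List ℕ} {f : Fin c.length → ℕ}

lemma translate_dom (hd : Dominates (List.ofFn f) c) : ∀ n, CS c n ≤ SP f n := by
  intro n
  have h := hd n
  rw [take_sum_eq, ofFn_take_sum] at h
  exact h

lemma translate_tot (hr : Refines (flatt (List.ofFn f)) (flatt c)) :
    SP f c.length = c.sum := by
  obtain ⟨Lw, _, hfl, hms⟩ := hr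
  have h1 : (flatt (List.ofFn f)).sum = (flatt c).sum := by
    rw [← hfl, ← hms, List.sum_flatten]
  rw [flatt_sum, flatt_sum] at h1
  rw [← ofFn_take_sum f c.length, List.take_of_length_le (by rw [List.length_ofFn]), h1]

lemma translate_cut (hr : Refines (flatt (List.ofFn f)) (flatt c)) :
    ∀ r, ∃ j, SP f j = CS c r := by
  intro r
  obtain ⟨r', hr'⟩ := exists_take_filter c r
  obtain ⟨Lw, _, hfl, hms⟩ := hr
  obtain ⟨j, hj⟩ := exists_take_of_filter (List.ofFn f) ((Lw.take r').flatten).length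
  refine ⟨j, ?_⟩
  have h2 : ((flatt (List.ofFn f)).take ((Lw.take r').flatten).length).sum =
      ((flatt c).take r').sum := by
    rw [← hfl, ← hms]
    exact flatten_take_prefix Lw r'
  rw [← ofFn_take_sum f j, hj]
  show ((flatt (List.ofFn f)).take _).sum = CS c r
  rw [h2]
  show ((c.filter (· ≠ 0)).take r').sum = CS c r
  rw [hr', take_sum_eq]
  rfl

end Translate

end

theorem slide_polynomial_eq (c : List ℕ) :
    (∑ T ∈ Finset.univ.filter (fun T : {p // p ∈ boxes c} → Fin c.length => IsWCTFn c T),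
      ∏ b : {p // p ∈ boxes c}, (X ((T b : ℕ)) : MvPolynomial ℕ ℤ))
    =
    (∑ d ∈ Finset.univ.filter
        (fun d : Fin c.length → Fin (c.sum + 1) =>
          Dominates (List.ofFn fun i => ((d i : ℕ))) c ∧
          Refines (flatt (List.ofFn fun i => ((d i : ℕ)))) (flatt c)),
      ∏ i : Fin c.length, (X ((i : ℕ)) : MvPolynomial ℕ ℤ) ^ ((d i : ℕ))) := by
  classical
  refine Finset.sum_bij
    (fun T _ => fun i => (⟨cnt T i, Nat.lt_succ_of_le (cnt_le_sum i)⟩ : Fin (c.sum + 1)))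
    ?_ ?_ ?_ ?_
  · -- membership
    intro T hT
    have hT' : IsWCTFn c T := (Finset.mem_filter.1 hT).2
    rw [Finset.mem_filter]
    refine ⟨Finset.mem_univ _, ?_, ?_⟩
    · show Dominates (List.ofFn fun i => cnt T i) c
      intro n
      rw [take_sum_eq, ofFn_take_sum]
      exact cnt_dominates hT' n
    · show Refines (flatt (List.ofFn fun i => cnt T i)) (flatt c)
      exact refines_cnt hT'
  · -- injectivity
    intro T₁ h₁ T₂ h₂ heq
    have hc : (fun i => cnt T₁ i) = (fun i => cnt T₂ i) :=
      funext fun i => congrArg Fin.val (congrFun heq i)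
    have w₁ : IsWCTFn c T₁ := (Finset.mem_filter.1 h₁).2
    have w₂ : IsWCTFn c T₂ := (Finset.mem_filter.1 h₂).2
    calc T₁ = Phi c (fun i => cnt T₁ i) := (Phi_eq_of_wct w₁).symm
      _ = Phi c (fun i => cnt T₂ i) := by rw [hc]
      _ = T₂ := Phi_eq_of_wct w₂
  · -- surjectivity
    intro d hd
    obtain ⟨-, hdom0, href0⟩ := Finset.mem_filter.1 hd
    have hdom := translate_dom (f := fun i => (d i : ℕ)) hdom0
    have htot := translate_tot (f := fun i => (d i : ℕ)) href0
    have hcut := translate_cut (f := fun i => (d i : ℕ)) href0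
    refine ⟨Phi c (fun i => (d i : ℕ)), ?_, ?_⟩
    · exact Finset.mem_filter.2 ⟨Finset.mem_univ _, Phi_isWCT hdom htot hcut⟩
    · funext i
      apply Fin.ext
      show cnt (Phi c (fun i => (d i : ℕ))) i = (d i : ℕ)
      exact Phi_cnt htot i
  · -- values
    intro T hT
    rw [← Finset.prod_fiberwise_of_maps_to (g := T) (t := Finset.univ)
      (fun b _ => Finset.mem_univ _) (fun b => (X ((T b : ℕ)) : MvPolynomial ℕ ℤ))]
    apply Finset.prod_congr rfl
    intro i _
    have h1 : ∏ b ∈ Finset.univ.filter (fun b => T b = i),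
        (X ((T b : ℕ)) : MvPolynomial ℕ ℤ) =
        ∏ _b ∈ Finset.univ.filter (fun b => T b = i), (X ((i : ℕ)) : MvPolynomial ℕ ℤ) :=
      Finset.prod_congr rfl fun b hb => by rw [(Finset.mem_filter.1 hb).2]
    rw [h1, Finset.prod_const]
    rfl
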